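/- Let k ≥ 1. For an invertible k × k real matrix A, let γ_A denote the probability measure on ℝ^k with density proportional to x ↦ exp(−|Ax|²/2). Then for any invertible k × k matrices A and B, d_TV(γ_A, γ_B) ≤ C k ‖BA^{-1} − Id‖, where ‖·‖ is the operator norm and C > 0 is a universal constant. -/

import Mathlib

set_option maxHeartbeats 1000000

open MeasureTheory Real Filter

/-- The probability measure on `ℝ^k` with density proportional to `x ↦ exp(−|Ax|²/2)`. -/
noncomputable def gaussOf {k : ℕ} (A : Matrix (Fin k) (Fin k) ℝ) : Measure (Fin k → ℝ) :=
  volume.withDensity fun x =>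
    ENNReal.ofReal
      (Real.exp (-(∑ i, (A.mulVec x i) ^ 2) / 2) /
        ∫ y : Fin k → ℝ, Real.exp (-(∑ i, (A.mulVec y i) ^ 2) / 2))

/- ### One-dimensional Gaussian facts -/

lemma g1_integrable : Integrable (fun t : ℝ => Real.exp (-t ^ 2 / 2)) := by
  have h := integrable_exp_neg_mul_sq (b := (2:ℝ)⁻¹) (by norm_num)
  convert h using 2 with t; ring_nf

lemma g1_sq_integrable : Integrable (fun t : ℝ => t ^ 2 * Real.exp (-t ^ 2 / 2)) := by
  have h := integrable_rpow_mul_exp_neg_mul_sq (b := (2:ℝ)⁻¹) (by norm_num) (s := 2) (by norm_num)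
  convert h using 2 with t
  rw [show (2:ℝ) = ((2:ℕ):ℝ) by norm_num, Real.rpow_natCast]; ring_nf

lemma g1_pos : 0 < ∫ t : ℝ, Real.exp (-t ^ 2 / 2) := by
  have : (fun t : ℝ => Real.exp (-t ^ 2 / 2)) = fun t : ℝ => Real.exp (-(2:ℝ)⁻¹ * t ^ 2) := by
    funext t; ring_nf
  rw [this, integral_gaussian]
  positivity

lemma g1_moment : ∫ t : ℝ, t ^ 2 * Real.exp (-t ^ 2 / 2) = ∫ t : ℝ, Real.exp (-t ^ 2 / 2) := by
  have hderiv : ∀ x : ℝ, HasDerivAt (fun t : ℝ => -t * Real.exp (-t ^ 2 / 2))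
      (x ^ 2 * Real.exp (-x ^ 2 / 2) - Real.exp (-x ^ 2 / 2)) x := by
    intro x
    have h1 : HasDerivAt (fun t : ℝ => -t ^ 2 / 2) (-x) x := by
      have : HasDerivAt (fun t : ℝ => -(t ^ 2 / 2)) _ x := ((hasDerivAt_pow 2 x).div_const 2).neg
      have heq : (fun t : ℝ => -(t ^ 2 / 2)) = fun t : ℝ => -t ^ 2 / 2 := by
        funext t; ring
      rw [heq] at this
      convert this using 1; push_cast; ring
    have h2 := h1.exp
    have h3 : HasDerivAt (fun t : ℝ => -t) (-1) x := (hasDerivAt_id x).neg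
    have : HasDerivAt (fun t : ℝ => -t * Real.exp (-t ^ 2 / 2)) _ x := h3.mul h2
    convert this using 1; ring
  have hint : Integrable (fun x : ℝ => x ^ 2 * Real.exp (-x ^ 2 / 2) - Real.exp (-x ^ 2 / 2)) :=
    g1_sq_integrable.sub g1_integrable
  have h1top : Tendsto (fun x : ℝ => x * Real.exp (-x ^ 2 / 2)) atTop (nhds 0) := by
    have ho := rpow_mul_exp_neg_mul_sq_isLittleO_exp_neg (b := (2:ℝ)⁻¹) (by norm_num) 1
    have hcomp : Tendsto (fun x : ℝ => Real.exp (-(1/2 : ℝ) * x)) atTop (nhds 0) := by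
      have hm : Tendsto (fun x : ℝ => (1/2 : ℝ) * x) atTop atTop :=
        Tendsto.const_mul_atTop (by norm_num) tendsto_id
      have := tendsto_exp_neg_atTop_nhds_zero.comp hm
      convert this using 2 with x
      simp only [Function.comp_apply]; ring_nf
    have h := ho.isBigO.trans_tendsto hcomp
    have heq : (fun x : ℝ => x ^ (1:ℝ) * Real.exp (-2⁻¹ * x ^ 2))
        = fun x : ℝ => x * Real.exp (-x ^ 2 / 2) := by
      funext x; rw [Real.rpow_one]; ring_nf
    rwa [heq] at h
  have htop : Tendsto (fun x : ℝ => -x * Real.exp (-x ^ 2 / 2)) atTop (nhds 0) := by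
    have := h1top.neg
    rw [neg_zero] at this
    convert this using 2 with x; ring
  have hbot : Tendsto (fun x : ℝ => -x * Real.exp (-x ^ 2 / 2)) atBot (nhds 0) := by
    have := h1top.comp tendsto_neg_atBot_atTop
    convert this using 2 with x
    simp only [Function.comp_apply]
    ring_nf
  have h0 := integral_of_hasDerivAt_of_tendsto hderiv hint hbot htop
  rw [sub_zero] at h0
  have := integral_sub g1_sq_integrable g1_integrable
  rw [h0] at this
  linarith []

/- ### Multi-dimensional Gaussian facts -/

variable {k : ℕ}

/-- Unnormalized standard Gaussian density on `ℝ^k`. -/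
noncomputable def gk (v : Fin k → ℝ) : ℝ := Real.exp (-(∑ i, v i ^ 2) / 2)

/-- `|v|² · gk v`. -/
noncomputable def hkf (v : Fin k → ℝ) : ℝ := (∑ i, v i ^ 2) * Real.exp (-(∑ i, v i ^ 2) / 2)

lemma gk_nonneg (v : Fin k → ℝ) : 0 ≤ gk v := (Real.exp_pos _).le

lemma hkf_nonneg (v : Fin k → ℝ) : 0 ≤ hkf v := by
  apply mul_nonneg ?_ (Real.exp_pos _).le
  positivity

lemma gk_prod (v : Fin k → ℝ) : gk v = ∏ i, Real.exp (-v i ^ 2 / 2) := by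
  rw [gk, ← Real.exp_sum]
  congr 1
  simp [neg_div, Finset.sum_div]

lemma gk_integrable : Integrable (gk : (Fin k → ℝ) → ℝ) := by
  have : (gk : (Fin k → ℝ) → ℝ) = fun v => ∏ i, Real.exp (-v i ^ 2 / 2) := funext gk_prod
  rw [this]
  exact Integrable.fintype_prod (𝕜 := ℝ) (ι := Fin k)
    (f := fun (_ : Fin k) (t : ℝ) => Real.exp (-t ^ 2 / 2)) fun _ => g1_integrable

lemma gk_integral : ∫ v : Fin k → ℝ, gk v = (∫ t : ℝ, Real.exp (-t ^ 2 / 2)) ^ k := by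
  simp_rw [gk_prod]
  erw [integral_fintype_prod_eq_pow (ι := Fin k) (fun t : ℝ => Real.exp (-t ^ 2 / 2))]; rw [Fintype.card_fin]

lemma gk_integral_pos : 0 < ∫ v : Fin k → ℝ, gk v := by
  rw [gk_integral]; exact pow_pos g1_pos k

lemma hk_summand_eq (i : Fin k) (v : Fin k → ℝ) :
    (∏ j, (if j = i then v j ^ 2 else 1) * Real.exp (-v j ^ 2 / 2)) = v i ^ 2 * gk v := by
  rw [Finset.prod_mul_distrib, gk_prod]
  congr 1
  simp [Finset.prod_ite_eq']

lemma hk_summand_integrable (i : Fin k) :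
    Integrable (fun v : Fin k → ℝ => v i ^ 2 * gk v) := by
  have h : ∀ j : Fin k,
      Integrable (fun t : ℝ => (if j = i then t ^ 2 else 1) * Real.exp (-t ^ 2 / 2)) := by
    intro j
    by_cases hji : j = i <;> simp [hji, g1_sq_integrable, g1_integrable]
  have := Integrable.fintype_prod (f := fun (j : Fin k) (t : ℝ) =>
    (if j = i then t ^ 2 else 1) * Real.exp (-t ^ 2 / 2)) h
  refine this.congr (Filter.Eventually.of_forall fun v => ?_)
  exact hk_summand_eq i v

lemma hk_summand_integral (i : Fin k) :
    ∫ v : Fin k → ℝ, v i ^ 2 * gk v = ∫ v : Fin k → ℝ, gk v := by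
  have h1 : ∫ v : Fin k → ℝ, v i ^ 2 * gk v
      = ∫ v : Fin k → ℝ, ∏ j, (if j = i then v j ^ 2 else 1) * Real.exp (-v j ^ 2 / 2) := by
    congr 1; funext v; rw [hk_summand_eq]
  rw [h1]; erw [integral_fintype_prod_eq_prod (ι := Fin k)
    (f := fun (j : Fin k) (t : ℝ) => (if j = i then t ^ 2 else 1) * Real.exp (-t ^ 2 / 2))]; rw [
    gk_integral]
  have : ∀ j : Fin k, (∫ t : ℝ, (if j = i then t ^ 2 else 1) * Real.exp (-t ^ 2 / 2))
      = ∫ t : ℝ, Real.exp (-t ^ 2 / 2) := by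
    intro j
    by_cases hji : j = i <;> simp [hji, g1_moment]
  rw [Finset.prod_congr rfl fun j _ => this j, Finset.prod_const, Finset.card_univ,
    Fintype.card_fin]

lemma hkf_eq_sum (v : Fin k → ℝ) : hkf v = ∑ i, v i ^ 2 * gk v := by
  rw [hkf, ← Finset.sum_mul, gk]

lemma hkf_integrable : Integrable (hkf : (Fin k → ℝ) → ℝ) := by
  have : (hkf : (Fin k → ℝ) → ℝ) = fun v => ∑ i, v i ^ 2 * gk v := funext hkf_eq_sum
  rw [this]
  exact integrable_finset_sum _ fun i _ => hk_summand_integrable i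

lemma hkf_integral : ∫ v : Fin k → ℝ, hkf v = k * ∫ v : Fin k → ℝ, gk v := by
  simp_rw [hkf_eq_sum]
  rw [integral_finset_sum _ fun i _ => hk_summand_integrable i]
  simp [hk_summand_integral, Finset.sum_const, Finset.card_univ]

/- ### Change of variables by an invertible matrix -/

lemma mulVec_continuous (A : Matrix (Fin k) (Fin k) ℝ) :
    Continuous (fun x : Fin k → ℝ => A.mulVec x) := by
  have : (fun x : Fin k → ℝ => A.mulVec x) = ⇑(Matrix.toLin' A) := by
    funext x; rw [Matrix.toLin'_apply]
  rw [this]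
  exact (Matrix.toLin' A).continuous_of_finiteDimensional

lemma map_mulVec (A : Matrix (Fin k) (Fin k) ℝ) (hA : IsUnit A.det) :
    Measure.map (fun x : Fin k → ℝ => A.mulVec x) volume
      = ENNReal.ofReal |A.det|⁻¹ • volume := by
  have hc : (fun x : Fin k → ℝ => A.mulVec x) = ⇑(Matrix.toLin' A) := by
    funext x; rw [Matrix.toLin'_apply]
  rw [hc]
  have hdet : LinearMap.det (Matrix.toLin' A) ≠ 0 := by
    rw [LinearMap.det_toLin']; exact hA.ne_zero
  rw [Measure.map_linearMap_addHaar_pi_eq_smul_addHaar hdet volume, LinearMap.det_toLin',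
    abs_inv]

lemma integrable_comp_mulVec {A : Matrix (Fin k) (Fin k) ℝ} (hA : IsUnit A.det)
    {g : (Fin k → ℝ) → ℝ} (hg : Integrable g) :
    Integrable (fun x : Fin k → ℝ => g (A.mulVec x)) := by
  have hmeas : AEMeasurable (fun x : Fin k → ℝ => A.mulVec x) volume :=
    (mulVec_continuous A).aemeasurable
  have hsm : AEStronglyMeasurable g (Measure.map (fun x : Fin k → ℝ => A.mulVec x) volume) := by
    rw [map_mulVec A hA]
    exact hg.aestronglyMeasurable.mono_ac Measure.smul_absolutelyContinuous
  exact (integrable_map_measure hsm hmeas).mp (by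
    rw [map_mulVec A hA]; exact hg.smul_measure ENNReal.ofReal_ne_top)

lemma integral_comp_mulVec {A : Matrix (Fin k) (Fin k) ℝ} (hA : IsUnit A.det)
    {g : (Fin k → ℝ) → ℝ} (hg : Integrable g) :
    ∫ x : Fin k → ℝ, g (A.mulVec x) = |A.det|⁻¹ * ∫ y : Fin k → ℝ, g y := by
  have hmeas : AEMeasurable (fun x : Fin k → ℝ => A.mulVec x) volume :=
    (mulVec_continuous A).aemeasurable
  have hsm : AEStronglyMeasurable g (Measure.map (fun x : Fin k → ℝ => A.mulVec x) volume) := by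
    rw [map_mulVec A hA]
    exact hg.aestronglyMeasurable.mono_ac Measure.smul_absolutelyContinuous
  rw [← integral_map hmeas hsm, map_mulVec A hA, integral_smul_measure,
    ENNReal.toReal_ofReal (by positivity), smul_eq_mul]

/- ### Euclidean norm facts -/

noncomputable def en (v : Fin k → ℝ) : ℝ := Real.sqrt (∑ i, v i ^ 2)

lemma en_nonneg (v : Fin k → ℝ) : 0 ≤ en v := Real.sqrt_nonneg _

lemma en_sq (v : Fin k → ℝ) : en v ^ 2 = ∑ i, v i ^ 2 := by
  rw [en, Real.sq_sqrt]; positivity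

lemma en_eq_norm (v : Fin k → ℝ) : en v = ‖(WithLp.equiv 2 (Fin k → ℝ)).symm v‖ := by
  rw [EuclideanSpace.norm_eq, en]
  congr 1
  exact Finset.sum_congr rfl fun i _ => by
    rw [WithLp.equiv_symm_apply, PiLp.toLp_apply, Real.norm_eq_abs, sq_abs]

lemma en_add_le (u v : Fin k → ℝ) : en (u + v) ≤ en u + en v := by
  rw [en_eq_norm, en_eq_norm, en_eq_norm]
  have : (WithLp.equiv 2 (Fin k → ℝ)).symm (u + v)
      = (WithLp.equiv 2 (Fin k → ℝ)).symm u + (WithLp.equiv 2 (Fin k → ℝ)).symm v := rfl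
  rw [this]
  exact norm_add_le _ _

lemma en_neg (v : Fin k → ℝ) : en (-v) = en v := by
  unfold en; congr 1; exact Finset.sum_congr rfl fun i _ => by simp

lemma en_mulVec_le (M : Matrix (Fin k) (Fin k) ℝ) (v : Fin k → ℝ) :
    en (M.mulVec v) ≤ ‖LinearMap.toContinuousLinearMap (Matrix.toEuclideanLin M)‖ * en v := by
  rw [en_eq_norm, en_eq_norm]
  have h := (LinearMap.toContinuousLinearMap (Matrix.toEuclideanLin M)).le_opNorm
    ((WithLp.equiv 2 (Fin k → ℝ)).symm v)
  rw [WithLp.equiv_symm_apply] at h ⊢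
  rwa [LinearMap.coe_toContinuousLinearMap', Matrix.toEuclideanLin_apply_piLp_toLp] at h

/- ### Scalar inequalities -/

lemma abs_exp_sub_exp (x y : ℝ) :
    |Real.exp (-x) - Real.exp (-y)| ≤ |x - y| * (Real.exp (-x) + Real.exp (-y)) := by
  wlog h : x ≤ y generalizing x y
  · rw [abs_sub_comm, abs_sub_comm x y, add_comm]
    exact this y x (le_of_not_ge h)
  have h1 : Real.exp (-x) - Real.exp (-y) ≤ (y - x) * Real.exp (-x) := by
    have hle : (x - y) + 1 ≤ Real.exp (x - y) := Real.add_one_le_exp _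
    have he : Real.exp (x - y) * Real.exp (-x) = Real.exp (-y) := by
      rw [← Real.exp_add]; ring_nf
    nlinarith [Real.exp_pos (-x), Real.exp_pos (-y)]
  have h2 : Real.exp (-y) ≤ Real.exp (-x) := Real.exp_le_exp.mpr (by linarith)
  rw [abs_of_nonneg (by linarith), abs_of_nonpos (by linarith)]
  nlinarith [Real.exp_pos (-x), Real.exp_pos (-y)]

lemma key_scalar {ε nA nB nD : ℝ} (hε0 : 0 ≤ ε) (hε : ε ≤ 1/2)
    (hA0 : 0 ≤ nA) (hB0 : 0 ≤ nB)
    (hBA : nB ≤ nA + nD) (hAB : nA ≤ nB + nD) (hD : nD ≤ ε * nA) :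
    |Real.exp (-(nA ^ 2) / 2) - Real.exp (-(nB ^ 2) / 2)|
      ≤ (5/4) * ε * (nA ^ 2 * Real.exp (-(nA ^ 2) / 2))
        + 5 * ε * (nB ^ 2 * Real.exp (-(nB ^ 2) / 2)) := by
  have hD0 : 0 ≤ nD := by linarith
  have habs : |nA ^ 2 / 2 - nB ^ 2 / 2| ≤ (5/4) * ε * nA ^ 2 := by
    have h1 : |nA - nB| ≤ nD := abs_le.mpr ⟨by linarith, by linarith⟩
    have h2 : nB ≤ (3/2) * nA := by nlinarith
    have heq : nA ^ 2 / 2 - nB ^ 2 / 2 = (nA - nB) * ((nA + nB) / 2) := by ring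
    rw [heq, abs_mul, abs_of_nonneg (by positivity : (0:ℝ) ≤ (nA + nB)/2)]
    calc |nA - nB| * ((nA + nB)/2) ≤ nD * ((nA + nB)/2) := by
          apply mul_le_mul_of_nonneg_right h1 (by positivity)
      _ ≤ (ε * nA) * ((nA + (3/2) * nA)/2) := by
          apply mul_le_mul hD (by linarith) (by positivity) (by positivity)
      _ = (5/4) * ε * nA ^ 2 := by ring
  have h3 : nA ≤ 2 * nB := by nlinarith [mul_le_mul_of_nonneg_right hε hA0]
  have hAB2 : nA ^ 2 ≤ 4 * nB ^ 2 := by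
    nlinarith [mul_le_mul h3 h3 hA0 (by linarith : (0:ℝ) ≤ 2 * nB)]
  have h0 := abs_exp_sub_exp (nA ^ 2 / 2) (nB ^ 2 / 2)
  have hrw : ∀ t : ℝ, -(t ^ 2) / 2 = -(t ^ 2 / 2) := fun t => by ring
  rw [hrw nA, hrw nB]
  have hEA := Real.exp_pos (-(nA ^ 2 / 2))
  have hEB := Real.exp_pos (-(nB ^ 2 / 2))
  calc |Real.exp (-(nA ^ 2 / 2)) - Real.exp (-(nB ^ 2 / 2))|
      ≤ |nA ^ 2 / 2 - nB ^ 2 / 2| * (Real.exp (-(nA ^ 2 / 2)) + Real.exp (-(nB ^ 2 / 2))) := h0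
    _ ≤ ((5/4) * ε * nA ^ 2) * (Real.exp (-(nA ^ 2 / 2)) + Real.exp (-(nB ^ 2 / 2))) := by
        apply mul_le_mul_of_nonneg_right habs (by positivity)
    _ ≤ (5/4) * ε * (nA ^ 2 * Real.exp (-(nA ^ 2 / 2)))
        + 5 * ε * (nB ^ 2 * Real.exp (-(nB ^ 2 / 2))) := by
        nlinarith [mul_le_mul_of_nonneg_left (mul_le_mul_of_nonneg_right hAB2 hEB.le) hε0]

/- ### withDensity applied to a set -/

lemma withDensity_toReal {f : (Fin k → ℝ) → ℝ} (hf : Integrable f) (h0 : ∀ x, 0 ≤ f x)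
    {s : Set (Fin k → ℝ)} (hs : MeasurableSet s) :
    ((volume.withDensity fun x => ENNReal.ofReal (f x)) s).toReal = ∫ x in s, f x := by
  rw [withDensity_apply _ hs, ← ofReal_integral_eq_lintegral_ofReal hf.integrableOn
    (Filter.Eventually.of_forall fun x => h0 x), ENNReal.toReal_ofReal]
  exact setIntegral_nonneg hs fun x _ => h0 x

/- ### Main theorem -/

/-- There is a universal constant `C > 0` such that for all `k ≥ 1` and all invertible
`k × k` matrices `A`, `B`, one has `d_TV(γ_A, γ_B) ≤ C k ‖B A⁻¹ − Id‖`, where `‖·‖` is the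
operator norm (w.r.t. the Euclidean norm). -/
theorem stmt8 :
    ∃ C : ℝ, 0 < C ∧ ∀ k : ℕ, 1 ≤ k → ∀ A B : Matrix (Fin k) (Fin k) ℝ,
      IsUnit A.det → IsUnit B.det →
      ∀ s : Set (Fin k → ℝ), MeasurableSet s →
        |((gaussOf A) s).toReal - ((gaussOf B) s).toReal| ≤
          C * k * ‖LinearMap.toContinuousLinearMap
            (Matrix.toEuclideanLin (B * A⁻¹ - 1))‖ := by
  refine ⟨23, by norm_num, fun k hk1 A B hA hB s hs => ?_⟩
  set ε : ℝ := ‖LinearMap.toContinuousLinearMap (Matrix.toEuclideanLin (B * A⁻¹ - 1))‖ with hεdef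
  have hε0 : 0 ≤ ε := norm_nonneg _
  have hk0 : (1:ℝ) ≤ (k:ℝ) := by exact_mod_cast hk1
  -- basic quantities
  set ZA : ℝ := ∫ y : Fin k → ℝ, gk (A.mulVec y) with hZAdef
  set ZB : ℝ := ∫ y : Fin k → ℝ, gk (B.mulVec y) with hZBdef
  have intgA : Integrable (fun x : Fin k → ℝ => gk (A.mulVec x)) :=
    integrable_comp_mulVec hA gk_integrable
  have intgB : Integrable (fun x : Fin k → ℝ => gk (B.mulVec x)) :=
    integrable_comp_mulVec hB gk_integrable
  have inthA : Integrable (fun x : Fin k → ℝ => hkf (A.mulVec x)) :=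
    integrable_comp_mulVec hA hkf_integrable
  have inthB : Integrable (fun x : Fin k → ℝ => hkf (B.mulVec x)) :=
    integrable_comp_mulVec hB hkf_integrable
  have hZA : ZA = |A.det|⁻¹ * ∫ v : Fin k → ℝ, gk v := integral_comp_mulVec hA gk_integrable
  have hZB : ZB = |B.det|⁻¹ * ∫ v : Fin k → ℝ, gk v := integral_comp_mulVec hB gk_integrable
  have hdetA : A.det ≠ 0 := hA.ne_zero
  have hdetB : B.det ≠ 0 := hB.ne_zero
  have ZApos : 0 < ZA := by
    rw [hZA]
    exact mul_pos (by positivity) gk_integral_pos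
  have ZBpos : 0 < ZB := by
    rw [hZB]
    exact mul_pos (by positivity) gk_integral_pos
  have IA : ∫ x : Fin k → ℝ, hkf (A.mulVec x) = k * ZA := by
    rw [integral_comp_mulVec hA hkf_integrable, hkf_integral, hZA]; ring
  have IB : ∫ x : Fin k → ℝ, hkf (B.mulVec x) = k * ZB := by
    rw [integral_comp_mulVec hB hkf_integrable, hkf_integral, hZB]; ring
  -- identification of the measures
  have hgA : ((gaussOf A) s).toReal = ∫ x in s, gk (A.mulVec x) / ZA := by
    have : gaussOf A = volume.withDensity fun x => ENNReal.ofReal (gk (A.mulVec x) / ZA) := rfl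
    rw [this, withDensity_toReal (intgA.div_const ZA)
      (fun x => div_nonneg (gk_nonneg _) ZApos.le) hs]
  have hgB : ((gaussOf B) s).toReal = ∫ x in s, gk (B.mulVec x) / ZB := by
    have : gaussOf B = volume.withDensity fun x => ENNReal.ofReal (gk (B.mulVec x) / ZB) := rfl
    rw [this, withDensity_toReal (intgB.div_const ZB)
      (fun x => div_nonneg (gk_nonneg _) ZBpos.le) hs]
  rw [hgA, hgB]
  rcases le_or_gt (ε * k) (1/20) with hsmall | hbig
  swap
  -- large-ε case: both are probabilities
  · have hgAone : ∫ x : Fin k → ℝ, gk (A.mulVec x) / ZA = 1 := by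
      rw [integral_div, div_self ZApos.ne']
    have hgBone : ∫ x : Fin k → ℝ, gk (B.mulVec x) / ZB = 1 := by
      rw [integral_div, div_self ZBpos.ne']
    have hA1 : ∫ x in s, gk (A.mulVec x) / ZA ≤ 1 := by
      rw [← hgAone]
      exact setIntegral_le_integral (intgA.div_const ZA)
        (Filter.Eventually.of_forall fun x => div_nonneg (gk_nonneg _) ZApos.le)
    have hB1 : ∫ x in s, gk (B.mulVec x) / ZB ≤ 1 := by
      rw [← hgBone]
      exact setIntegral_le_integral (intgB.div_const ZB)
        (Filter.Eventually.of_forall fun x => div_nonneg (gk_nonneg _) ZBpos.le)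
    have hA0' : 0 ≤ ∫ x in s, gk (A.mulVec x) / ZA :=
      setIntegral_nonneg hs fun x _ => div_nonneg (gk_nonneg _) ZApos.le
    have hB0' : 0 ≤ ∫ x in s, gk (B.mulVec x) / ZB :=
      setIntegral_nonneg hs fun x _ => div_nonneg (gk_nonneg _) ZBpos.le
    have : |(∫ x in s, gk (A.mulVec x) / ZA) - ∫ x in s, gk (B.mulVec x) / ZB| ≤ 1 :=
      abs_le.mpr ⟨by linarith, by linarith⟩
    refine this.trans ?_
    have h23 : 23 * (k:ℝ) * ε = 23 * (ε * k) := by ring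
    rw [h23]
    linarith
  -- small-ε case
  · have hε2 : ε ≤ 1/2 := by nlinarith
    -- pointwise bound
    have hMA : (B * A⁻¹ - 1) * A = B - A := by
      rw [sub_mul, Matrix.mul_assoc, Matrix.nonsing_inv_mul A hA, Matrix.mul_one, Matrix.one_mul]
    have hptwise : ∀ x : Fin k → ℝ,
        |gk (A.mulVec x) - gk (B.mulVec x)|
          ≤ (5/4) * ε * hkf (A.mulVec x) + 5 * ε * hkf (B.mulVec x) := by
      intro x
      have hDle : en ((B - A).mulVec x) ≤ ε * en (A.mulVec x) := by
        have h1 : (B - A).mulVec x = (B * A⁻¹ - 1).mulVec (A.mulVec x) := by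
          rw [Matrix.mulVec_mulVec, hMA]
        rw [h1]
        exact en_mulVec_le _ _
      have hBA : en (B.mulVec x) ≤ en (A.mulVec x) + en ((B - A).mulVec x) := by
        have h1 : B.mulVec x = A.mulVec x + (B - A).mulVec x := by
          rw [Matrix.sub_mulVec]; abel
        rw [h1]
        exact en_add_le _ _
      have hAB : en (A.mulVec x) ≤ en (B.mulVec x) + en ((B - A).mulVec x) := by
        have h1 : A.mulVec x = B.mulVec x + (-((B - A).mulVec x)) := by
          rw [Matrix.sub_mulVec]; abel
        calc en (A.mulVec x) = en (B.mulVec x + (-((B - A).mulVec x))) := by rw [← h1]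
          _ ≤ en (B.mulVec x) + en (-((B - A).mulVec x)) := en_add_le _ _
          _ = en (B.mulVec x) + en ((B - A).mulVec x) := by rw [en_neg]
      have hkey := key_scalar hε0 hε2 (en_nonneg (A.mulVec x)) (en_nonneg (B.mulVec x))
        hBA hAB hDle
      rw [en_sq, en_sq] at hkey
      simpa [gk, hkf] using hkey
    -- integral of the pointwise difference
    set D : ℝ := ∫ x : Fin k → ℝ, |gk (A.mulVec x) - gk (B.mulVec x)| with hDdef
    have intdiff : Integrable (fun x : Fin k → ℝ => gk (A.mulVec x) - gk (B.mulVec x)) :=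
      intgA.sub intgB
    have hDle : D ≤ (5/4) * ε * (k * ZA) + 5 * ε * (k * ZB) := by
      rw [hDdef, ← IA, ← IB]
      have h1 : ∫ x : Fin k → ℝ, |gk (A.mulVec x) - gk (B.mulVec x)|
          ≤ ∫ x : Fin k → ℝ, ((5/4) * ε * hkf (A.mulVec x) + 5 * ε * hkf (B.mulVec x)) := by
        apply integral_mono intdiff.abs ((inthA.const_mul _).add (inthB.const_mul _))
        intro x
        exact hptwise x
      rw [integral_add (inthA.const_mul _) (inthB.const_mul _),
        integral_const_mul, integral_const_mul] at h1
      exact h1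
    have hZdiff : |ZA - ZB| ≤ D := by
      rw [hZAdef, hZBdef, ← integral_sub intgA intgB]
      calc |∫ x : Fin k → ℝ, (gk (A.mulVec x) - gk (B.mulVec x))|
          ≤ ∫ x : Fin k → ℝ, |gk (A.mulVec x) - gk (B.mulVec x)| := by
            simpa [Real.norm_eq_abs] using
              norm_integral_le_integral_norm (fun x : Fin k → ℝ =>
                gk (A.mulVec x) - gk (B.mulVec x))
        _ = D := rfl
    have hεk20 : ε * k ≤ 1/20 := hsmall
    have hZBle : ZB ≤ 2 * ZA := by
      have h1 : ZB - ZA ≤ |ZA - ZB| := by rw [abs_sub_comm]; exact le_abs_self _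
      nlinarith [mul_le_mul_of_nonneg_right hεk20 ZApos.le,
        mul_le_mul_of_nonneg_right hεk20 ZBpos.le]
    have hDfinal : D ≤ (45/4) * (ε * k) * ZA := by
      nlinarith [mul_le_mul_of_nonneg_left hZBle (mul_nonneg hε0 (by positivity : (0:ℝ) ≤ (k:ℝ)))]
    -- assembling
    have intfA : Integrable (fun x : Fin k → ℝ => gk (A.mulVec x) / ZA) := intgA.div_const _
    have intfB : Integrable (fun x : Fin k → ℝ => gk (B.mulVec x) / ZB) := intgB.div_const _
    have intfdiff : Integrable (fun x : Fin k → ℝ =>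
        gk (A.mulVec x) / ZA - gk (B.mulVec x) / ZB) := intfA.sub intfB
    have step1 : |(∫ x in s, gk (A.mulVec x) / ZA) - ∫ x in s, gk (B.mulVec x) / ZB|
        ≤ ∫ x : Fin k → ℝ, |gk (A.mulVec x) / ZA - gk (B.mulVec x) / ZB| := by
      rw [← integral_sub intfA.integrableOn intfB.integrableOn]
      calc |∫ x in s, (gk (A.mulVec x) / ZA - gk (B.mulVec x) / ZB)|
          ≤ ∫ x in s, |gk (A.mulVec x) / ZA - gk (B.mulVec x) / ZB| := by
            simpa [Real.norm_eq_abs] using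
              norm_integral_le_integral_norm (μ := volume.restrict s)
                (fun x : Fin k → ℝ => gk (A.mulVec x) / ZA - gk (B.mulVec x) / ZB)
        _ ≤ ∫ x : Fin k → ℝ, |gk (A.mulVec x) / ZA - gk (B.mulVec x) / ZB| :=
            setIntegral_le_integral intfdiff.abs
              (Filter.Eventually.of_forall fun x => abs_nonneg _)
    have hptw2 : ∀ x : Fin k → ℝ,
        |gk (A.mulVec x) / ZA - gk (B.mulVec x) / ZB|
          ≤ |gk (A.mulVec x) - gk (B.mulVec x)| / ZA
            + gk (B.mulVec x) * (|ZA - ZB| / (ZA * ZB)) := by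
      intro x
      have heq : gk (A.mulVec x) / ZA - gk (B.mulVec x) / ZB
          = (gk (A.mulVec x) - gk (B.mulVec x)) / ZA
            + gk (B.mulVec x) * ((ZB - ZA) / (ZA * ZB)) := by
        field_simp
        ring
      rw [heq]
      calc |(gk (A.mulVec x) - gk (B.mulVec x)) / ZA
            + gk (B.mulVec x) * ((ZB - ZA) / (ZA * ZB))|
          ≤ |(gk (A.mulVec x) - gk (B.mulVec x)) / ZA|
            + |gk (B.mulVec x) * ((ZB - ZA) / (ZA * ZB))| := abs_add_le _ _
        _ = |gk (A.mulVec x) - gk (B.mulVec x)| / ZA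
            + gk (B.mulVec x) * (|ZA - ZB| / (ZA * ZB)) := by
            rw [abs_div, abs_of_nonneg ZApos.le, abs_mul, abs_of_nonneg (gk_nonneg _), abs_div,
              abs_of_nonneg (by positivity : (0:ℝ) ≤ ZA * ZB), abs_sub_comm ZB ZA]
    have step2 : ∫ x : Fin k → ℝ, |gk (A.mulVec x) / ZA - gk (B.mulVec x) / ZB|
        ≤ D / ZA + |ZA - ZB| / ZA := by
      have h1 : ∫ x : Fin k → ℝ, |gk (A.mulVec x) / ZA - gk (B.mulVec x) / ZB|
          ≤ ∫ x : Fin k → ℝ, (|gk (A.mulVec x) - gk (B.mulVec x)| / ZA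
            + gk (B.mulVec x) * (|ZA - ZB| / (ZA * ZB))) := by
        apply integral_mono (intfA.sub intfB).abs
          ((intdiff.abs.div_const _).add (intgB.mul_const _))
        intro x
        exact hptw2 x
      rw [integral_add (intdiff.abs.div_const _) (intgB.mul_const _), integral_div,
        integral_mul_const] at h1
      have h2 : ZB * (|ZA - ZB| / (ZA * ZB)) = |ZA - ZB| / ZA := by
        field_simp
      rw [← hDdef, ← hZBdef] at h1
      rw [h2] at h1
      exact h1
    calc |(∫ x in s, gk (A.mulVec x) / ZA) - ∫ x in s, gk (B.mulVec x) / ZB|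
        ≤ ∫ x : Fin k → ℝ, |gk (A.mulVec x) / ZA - gk (B.mulVec x) / ZB| := step1
      _ ≤ D / ZA + |ZA - ZB| / ZA := step2
      _ ≤ D / ZA + D / ZA := by
          gcongr
      _ ≤ 23 * k * ε := by
          have hD2 : D / ZA ≤ (45/4) * (ε * k) := by
            rw [div_le_iff₀ ZApos]
            calc D ≤ (45/4) * (ε * k) * ZA := hDfinal
              _ = (45/4) * (ε * k) * ZA := rfl
          have hεk0 : 0 ≤ ε * k := mul_nonneg hε0 (by positivity)
          nlinarith
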